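/- arXiv:1310.5869 — 3 statements merged into one kernel-verified Lean document; each statement's English description precedes it below -/
import Mathlib

section
/- For any integers j ≥ 1 and k ≥ 1, the integer j divides the sum ∑_{d ∣ j} μ(d) · k^{j/d}, where μ is the Möbius function. -/
open ArithmeticFunction ArithmeticFunction.Moebius Finset

/-- Fermat: `p ∣ x^p - x` over `ℤ`. -/
lemma fermat_int (p : ℕ) (hp : p.Prime) (x : ℤ) : (p : ℤ) ∣ x ^ p - x := by
  haveI : Fact p.Prime := ⟨hp⟩
  have : ((x ^ p - x : ℤ) : ZMod p) = 0 := by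
    push_cast
    rw [ZMod.pow_card]
    ring
  exact (ZMod.intCast_zmod_eq_zero_iff_dvd _ _).mp this

/-- Key lifting lemma: `p^a ∣ x^(p^a) - x^(p^(a-1))`. -/
lemma pow_pow_sub (p : ℕ) (hp : p.Prime) (a : ℕ) (ha : 1 ≤ a) (x : ℤ) :
    (p : ℤ) ^ a ∣ x ^ p ^ a - x ^ p ^ (a - 1) := by
  obtain ⟨b, rfl⟩ := Nat.exists_eq_add_of_le ha
  have h := dvd_sub_pow_of_dvd_sub (fermat_int p hp x) b
  have e1 : (x ^ p) ^ p ^ b = x ^ p ^ (1 + b) := by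
    rw [← pow_mul, ← pow_succ', add_comm 1 b]
  rw [e1] at h
  simpa [add_comm 1 b] using h

/-- The prime-power divisibility of the necklace sum. -/
lemma necklace_prime_pow (j k p a : ℕ) (hj : j ≠ 0) (hp : p.Prime) (ha : 1 ≤ a)
    (hpa : p ^ a ∣ j) :
    (p : ℤ) ^ a ∣ ∑ d ∈ j.divisors, (μ d : ℤ) * (k : ℤ) ^ (j / d) := by
  have hpd : p ∣ j := dvd_trans (dvd_pow_self p (by omega)) hpa
  have hjp0 : j / p ≠ 0 := by
    have := Nat.le_of_dvd (by omega) hpd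
    exact Nat.div_ne_zero_iff_of_dvd hpd |>.mpr ⟨hj, hp.pos.ne'⟩
  have key : ∀ d : ℕ, d ∣ j → ¬ p ∣ d → p * d ∣ j := fun d hdj hnd =>
    (Nat.Coprime.mul_dvd_of_dvd_of_dvd (hp.coprime_iff_not_dvd.mpr hnd) hpd hdj)
  -- the two filtered index sets agree
  have hsets : j.divisors.filter (fun d => ¬ p ∣ d)
      = (j / p).divisors.filter (fun d => ¬ p ∣ d) := by
    ext d
    simp only [mem_filter, Nat.mem_divisors]
    constructor
    · rintro ⟨⟨hdj, _⟩, hnd⟩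
      exact ⟨⟨(Nat.dvd_div_iff_mul_dvd hpd).mpr (key d hdj hnd), hjp0⟩, hnd⟩
    · rintro ⟨⟨hdj, _⟩, hnd⟩
      exact ⟨⟨hdj.trans (Nat.div_dvd_of_dvd hpd), hj⟩, hnd⟩
  rw [← Finset.sum_filter_add_sum_filter_not j.divisors (fun d => ¬ p ∣ d)]
  -- reindex the second sum by e = d / p
  have hB : ∑ d ∈ j.divisors.filter (fun d => ¬ ¬ p ∣ d), (μ d : ℤ) * (k : ℤ) ^ (j / d)
      = ∑ e ∈ (j / p).divisors, (μ (p * e) : ℤ) * (k : ℤ) ^ (j / (p * e)) := by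
    refine Finset.sum_nbij' (fun d => d / p) (fun e => p * e) ?_ ?_ ?_ ?_ ?_
    · intro d hd
      simp only [mem_filter, Nat.mem_divisors, not_not] at hd
      obtain ⟨⟨hdj, _⟩, hpd'⟩ := hd
      obtain ⟨c, rfl⟩ := hpd'
      show p * c / p ∈ (j / p).divisors
      rw [Nat.mem_divisors, Nat.mul_div_cancel_left c hp.pos]
      exact ⟨(Nat.dvd_div_iff_mul_dvd hpd).mpr hdj, hjp0⟩
    · intro e he
      simp only [Nat.mem_divisors] at he
      simp only [mem_filter, Nat.mem_divisors, not_not]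
      exact ⟨⟨(Nat.dvd_div_iff_mul_dvd hpd).mp he.1, hj⟩, Dvd.intro e rfl⟩
    · intro d hd
      simp only [mem_filter, not_not] at hd
      exact Nat.mul_div_cancel' hd.2
    · intro e he
      exact Nat.mul_div_cancel_left e hp.pos
    · intro d hd
      simp only [mem_filter, not_not] at hd
      rw [Nat.mul_div_cancel' hd.2]
  rw [hB]
  -- split the reindexed sum over whether p ∣ e; the p ∣ e part vanishes
  rw [← Finset.sum_filter_add_sum_filter_not (j / p).divisors (fun e => ¬ p ∣ e)
    (fun e => (μ (p * e) : ℤ) * (k : ℤ) ^ (j / (p * e)))]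
  have hzero : ∑ e ∈ (j / p).divisors.filter (fun e => ¬ ¬ p ∣ e),
      (μ (p * e) : ℤ) * (k : ℤ) ^ (j / (p * e)) = 0 := by
    refine Finset.sum_eq_zero fun e he => ?_
    simp only [mem_filter, not_not] at he
    have hns : ¬ Squarefree (p * e) := fun hs => by
      have := hs p (by obtain ⟨c, rfl⟩ := he.2; ring_nf; exact ⟨c, by ring⟩)
      exact hp.one_lt.ne' (Nat.isUnit_iff.mp this)
    rw [moebius_eq_zero_of_not_squarefree hns]
    simp
  rw [hzero, add_zero, hsets, ← Finset.sum_add_distrib]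
  refine Finset.dvd_sum fun d hd => ?_
  simp only [mem_filter, Nat.mem_divisors] at hd
  obtain ⟨⟨hdjp, _⟩, hnd⟩ := hd
  have hdj : d ∣ j := hdjp.trans (Nat.div_dvd_of_dvd hpd)
  have hcop : Nat.Coprime (p ^ a) d := (hp.coprime_iff_not_dvd.mpr hnd).pow_left a
  have hpad : p ^ a * d ∣ j := hcop.mul_dvd_of_dvd_of_dvd hpa hdj
  obtain ⟨t, ht⟩ := hpad
  have hd0 : d ≠ 0 := by rintro rfl; exact hnd (dvd_zero p)
  have hp0 : (0:ℕ) < p := hp.pos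
  have e1 : j / d = p ^ a * t := by
    rw [ht]; rw [mul_comm (p ^ a) d, mul_assoc]; exact Nat.mul_div_cancel_left _ (by omega)
  have e2 : j / (p * d) = p ^ (a - 1) * t := by
    have : p ^ a = p * p ^ (a - 1) := by
      rw [← pow_succ']
      congr 1
      omega
    rw [ht, this]
    rw [show p * p ^ (a-1) * d * t = (p * d) * (p ^ (a-1) * t) by ring]
    exact Nat.mul_div_cancel_left _ (by positivity)
  have hmu : (μ (p * d) : ℤ) = -(μ d : ℤ) := by
    rw [isMultiplicative_moebius.map_mul_of_coprime (hp.coprime_iff_not_dvd.mpr hnd),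
      moebius_apply_prime hp]
    push_cast
    ring
  rw [hmu, e1, e2]
  have : (μ d : ℤ) * (k:ℤ) ^ (p ^ a * t) + -(μ d : ℤ) * (k:ℤ) ^ (p ^ (a-1) * t)
      = (μ d : ℤ) * (((k:ℤ) ^ t) ^ p ^ a - ((k:ℤ) ^ t) ^ p ^ (a - 1)) := by
    rw [← pow_mul, ← pow_mul, mul_comm t (p ^ a), mul_comm t (p ^ (a-1))]
    ring
  rw [this]
  exact Dvd.dvd.mul_left (pow_pow_sub p hp a ha _) _

open ArithmeticFunction ArithmeticFunction.Moebius in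
/-- Integrality of the necklace polynomial: `j` divides `∑_{d ∣ j} μ(d) k^(j/d)`. -/
theorem necklace_integrality (j k : ℕ) (hj : 1 ≤ j) (hk : 1 ≤ k) :
    (j : ℤ) ∣ ∑ d ∈ j.divisors, (μ d : ℤ) * (k : ℤ) ^ (j / d) := by
  set S : ℤ := ∑ d ∈ j.divisors, (μ d : ℤ) * (k : ℤ) ^ (j / d) with hS
  have hj0 : j ≠ 0 := by omega
  rcases eq_or_ne S 0 with h0 | h0
  · simp [h0]
  rw [Int.natCast_dvd]
  rw [← Nat.factorization_le_iff_dvd hj0 (Int.natAbs_ne_zero.mpr h0), Finsupp.le_def]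
  intro p
  rcases Nat.eq_zero_or_pos (j.factorization p) with hz | hpos
  · simp [hz]
  have hp : p.Prime := Nat.prime_of_mem_primeFactors (by
    rw [← Nat.support_factorization]
    exact Finsupp.mem_support_iff.mpr hpos.ne')
  rw [← Nat.Prime.pow_dvd_iff_le_factorization hp (Int.natAbs_ne_zero.mpr h0)]
  have h := necklace_prime_pow j k p _ hj0 hp hpos (Nat.ordProj_dvd j p)
  have h2 := Int.natAbs_dvd_natAbs.mpr h
  rwa [Int.natAbs_pow, Int.natAbs_natCast] at h2
end

section
/- Let G be a group with nilpotency class at most 3, let p > 3 be a prime and m ≥ 1, and suppose that every element of the commutator subgroup [G,G] has order dividing p^m. Then the map x ↦ x^{p^{2m}} is a group homomorphism on G. -/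
theorem collect_aux {G : Type*} [Group G] (x y c u v : G)
    (hu : ∀ g : G, Commute u g) (hv : ∀ g : G, Commute v g)
    (R1 : y * x = x * y * c)
    (R2 : c * x = x * c * u)
    (R3 : c * y = y * c * v) :
    ∀ n : ℕ, (x * y) ^ n =
      x ^ n * y ^ n * c ^ (n.choose 2) * u ^ (n.choose 3) *
        v ^ (2 * n.choose 3 + n.choose 2) := by
  have mvu : ∀ (i : ℕ) (a b : G), a * u ^ i * b = a * b * u ^ i := fun i a b => by
    rw [mul_assoc, ((hu b).pow_left i).eq, ← mul_assoc]
  have mvv : ∀ (i : ℕ) (a b : G), a * v ^ i * b = a * b * v ^ i := fun i a b => by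
    rw [mul_assoc, ((hv b).pow_left i).eq, ← mul_assoc]
  have mvu1 : ∀ (a b : G), a * u * b = a * b * u := fun a b => by
    rw [mul_assoc, (hu b).eq, ← mul_assoc]
  have mvv1 : ∀ (a b : G), a * v * b = a * b * v := fun a b => by
    rw [mul_assoc, (hv b).eq, ← mul_assoc]
  have hcax : ∀ a : ℕ, c ^ a * x = x * c ^ a * u ^ a := by
    intro a
    induction a with
    | zero => simp
    | succ a ih =>
      calc c ^ (a+1) * x = c ^ a * (c * x) := by rw [pow_succ, mul_assoc]
        _ = c ^ a * x * c * u := by rw [R2]; group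
        _ = x * c ^ a * u ^ a * c * u := by rw [ih]
        _ = x * c ^ a * c * u ^ a * u := by rw [mvu a (x * c ^ a) c]
        _ = x * c ^ (a+1) * u ^ (a+1) := by rw [pow_succ, pow_succ]; group
  have hcay : ∀ a : ℕ, c ^ a * y = y * c ^ a * v ^ a := by
    intro a
    induction a with
    | zero => simp
    | succ a ih =>
      calc c ^ (a+1) * y = c ^ a * (c * y) := by rw [pow_succ, mul_assoc]
        _ = c ^ a * y * c * v := by rw [R3]; group
        _ = y * c ^ a * v ^ a * c * v := by rw [ih]
        _ = y * c ^ a * c * v ^ a * v := by rw [mvv a (y * c ^ a) c]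
        _ = y * c ^ (a+1) * v ^ (a+1) := by rw [pow_succ, pow_succ]; group
  have hcyn : ∀ n : ℕ, c * y ^ n = y ^ n * c * v ^ n := by
    intro n
    induction n with
    | zero => simp
    | succ n ih =>
      calc c * y ^ (n+1) = (c * y) * y ^ n := by rw [pow_succ']; group
        _ = y * c * v * y ^ n := by rw [R3]
        _ = y * (c * y ^ n) * v := by rw [mvv1 (y * c) (y ^ n)]; group
        _ = y * (y ^ n * c * v ^ n) * v := by rw [ih]
        _ = y ^ (n+1) * c * v ^ (n+1) := by rw [pow_succ', pow_succ]; group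
  have hynx : ∀ n : ℕ, y ^ n * x = x * y ^ n * c ^ n * v ^ (n.choose 2) := by
    intro n
    induction n with
    | zero => simp
    | succ n ih =>
      have hch : (n+1).choose 2 = n.choose 2 + n := by
        simp [Nat.choose_succ_succ, Nat.choose_one_right, Nat.add_comm]
      calc y ^ (n+1) * x = y * (y ^ n * x) := by rw [pow_succ']; group
        _ = y * (x * y ^ n * c ^ n * v ^ (n.choose 2)) := by rw [ih]
        _ = (y * x) * y ^ n * c ^ n * v ^ (n.choose 2) := by group
        _ = x * y * (c * y ^ n) * c ^ n * v ^ (n.choose 2) := by rw [R1]; group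
        _ = x * y * (y ^ n * c * v ^ n) * c ^ n * v ^ (n.choose 2) := by rw [hcyn n]
        _ = x * y * y ^ n * c * v ^ n * c ^ n * v ^ (n.choose 2) := by group
        _ = x * y * y ^ n * c * c ^ n * v ^ n * v ^ (n.choose 2) := by
              rw [mvv n (x * y * y ^ n * c) (c ^ n)]
        _ = x * y ^ (n+1) * c ^ (n+1) * v ^ ((n+1).choose 2) := by
              rw [hch]; group
  intro n
  induction n with
  | zero => simp
  | succ n ih =>
    have hch2 : (n+1).choose 2 = n.choose 2 + n := by
      simp [Nat.choose_succ_succ, Nat.choose_one_right, Nat.add_comm]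
    have hch3 : (n+1).choose 3 = n.choose 3 + n.choose 2 := by
      simp [Nat.choose_succ_succ, Nat.add_comm]
    set A := n.choose 2 with hA
    set B := n.choose 3 with hB
    calc (x*y) ^ (n+1) = x ^ n * y ^ n * c ^ A * u ^ B * v ^ (2*B+A) * (x * y) := by
            rw [pow_succ, ih]
      _ = x ^ n * y ^ n * c ^ A * u ^ B * (x * y) * v ^ (2*B+A) := by
            rw [mvv (2*B+A) (x ^ n * y ^ n * c ^ A * u ^ B) (x * y)]
      _ = x ^ n * y ^ n * (c ^ A * x) * y * u ^ B * v ^ (2*B+A) := by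
            rw [mvu B (x ^ n * y ^ n * c ^ A) (x * y)]; group
      _ = x ^ n * y ^ n * (x * c ^ A * u ^ A) * y * u ^ B * v ^ (2*B+A) := by
            rw [hcax A]
      _ = x ^ n * y ^ n * (x * c ^ A) * u ^ A * y * u ^ B * v ^ (2*B+A) := by group
      _ = x ^ n * y ^ n * x * c ^ A * y * u ^ A * u ^ B * v ^ (2*B+A) := by
            rw [mvu A (x ^ n * y ^ n * (x * c ^ A)) y]; group
      _ = x ^ n * (y ^ n * x) * (c ^ A * y) * u ^ A * u ^ B * v ^ (2*B+A) := by group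
      _ = x ^ n * (y ^ n * x) * (y * c ^ A * v ^ A) * u ^ A * u ^ B * v ^ (2*B+A) := by
            rw [hcay A]
      _ = x ^ n * (x * y ^ n * c ^ n * v ^ A) * (y * c ^ A * v ^ A) * u ^ A * u ^ B
            * v ^ (2*B+A) := by rw [hynx n, ← hA]
      _ = x ^ n * x * y ^ n * c ^ n * v ^ A * y * c ^ A * v ^ A * u ^ A * u ^ B
            * v ^ (2*B+A) := by group
      _ = x ^ n * x * y ^ n * (c ^ n * y) * c ^ A * v ^ A * v ^ A * u ^ A * u ^ B
            * v ^ (2*B+A) := by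
            rw [mvv A (x ^ n * x * y ^ n * c ^ n) y,
                mvv A (x ^ n * x * y ^ n * c ^ n * y) (c ^ A)]; group
      _ = x ^ n * x * y ^ n * (y * c ^ n * v ^ n) * c ^ A * v ^ A * v ^ A * u ^ A * u ^ B
            * v ^ (2*B+A) := by rw [hcay n]
      _ = x ^ n * x * y ^ n * (y * c ^ n) * v ^ n * c ^ A * v ^ A * v ^ A * u ^ A * u ^ B
            * v ^ (2*B+A) := by group
      _ = x ^ n * x * y ^ n * (y * c ^ n) * c ^ A * v ^ n * v ^ A * v ^ A * u ^ A * u ^ B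
            * v ^ (2*B+A) := by
            rw [mvv n (x ^ n * x * y ^ n * (y * c ^ n)) (c ^ A)]
      _ = x ^ (n+1) * y ^ (n+1) * c ^ (n + A) * v ^ (n + A + A) * u ^ A * u ^ B
            * v ^ (2*B+A) := by group
      _ = x ^ (n+1) * y ^ (n+1) * c ^ (n + A) * v ^ (n + A + A) * u ^ (A + B)
            * v ^ (2*B+A) := by group
      _ = x ^ (n+1) * y ^ (n+1) * c ^ (n + A) * v ^ (n + A + A) * v ^ (2*B+A)
            * u ^ (A + B) := by
            rw [mvu (A + B) (x ^ (n+1) * y ^ (n+1) * c ^ (n+A) * v ^ (n+A+A)) (v ^ (2*B+A))]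
      _ = x ^ (n+1) * y ^ (n+1) * c ^ (n + A) * v ^ (n + A + A + (2*B+A))
            * u ^ (A + B) := by rw [mul_assoc (x ^ (n+1) * y ^ (n+1) * c ^ (n+A))
              (v ^ (n+A+A)) (v ^ (2*B+A)), ← pow_add]
      _ = x ^ (n+1) * y ^ (n+1) * c ^ (n + A) * u ^ (A + B)
            * v ^ (n + A + A + (2*B+A)) := by
            rw [mvv (n+A+A+(2*B+A)) (x ^ (n+1) * y ^ (n+1) * c ^ (n+A)) (u ^ (A+B))]
      _ = x ^ (n+1) * y ^ (n+1) * c ^ ((n+1).choose 2) * u ^ ((n+1).choose 3) *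
            v ^ (2 * (n+1).choose 3 + (n+1).choose 2) := by
            rw [hch2, hch3, show A + n = n + A by omega, show B + A = A + B by omega,
              show 2 * (A + B) + (n + A) = n + A + A + (2*B+A) by ring]

open scoped commutatorElement

/-- If `G` has nilpotency class at most 3, `p > 3` is a prime, `m ≥ 1`, and every element of
the commutator subgroup has order dividing `p^m`, then `x ↦ x^(p^(2m))` is a homomorphism. -/
theorem pow_hom_of_class_three (G : Type*) [Group G]
    (hclass : (⊤ : Subgroup G).lowerCentralSeries 3 = ⊥)
    (p : ℕ) (hp : p.Prime) (hp3 : 3 < p) (m : ℕ) (hm : 1 ≤ m)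
    (hcomm : ∀ c ∈ commutator G, c ^ (p ^ m) = 1) :
    ∀ x y : G, (x * y) ^ (p ^ (2 * m)) = x ^ (p ^ (2 * m)) * y ^ (p ^ (2 * m)) := by
  intro x y
  set c : G := y⁻¹ * x⁻¹ * y * x with hcdef
  set u : G := c⁻¹ * x⁻¹ * c * x with hudef
  set v : G := c⁻¹ * y⁻¹ * c * y with hvdef
  have hcentral : ∀ w ∈ (⊤ : Subgroup G).lowerCentralSeries 2, ∀ g : G, Commute w g := by
    intro w hw g
    have h3 : ⁅w, g⁆ ∈ (⊤ : Subgroup G).lowerCentralSeries 3 :=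
      Subgroup.commutator_mem_commutator hw (Subgroup.mem_top g)
    rw [hclass, Subgroup.mem_bot] at h3
    exact commutatorElement_eq_one_iff_commute.mp h3
  have hc_mem : c ∈ (⊤ : Subgroup G).lowerCentralSeries 1 := by
    have hc' : c = ⁅y⁻¹, x⁻¹⁆ := by rw [hcdef, commutatorElement_def]; group
    rw [hc']
    exact Subgroup.commutator_mem_commutator (Subgroup.mem_top _) (Subgroup.mem_top _)
  have hu_mem : u ∈ (⊤ : Subgroup G).lowerCentralSeries 2 := by
    have hu' : u = ⁅c⁻¹, x⁻¹⁆ := by rw [hudef, commutatorElement_def]; group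
    rw [hu']
    exact Subgroup.commutator_mem_commutator
      (((⊤ : Subgroup G).lowerCentralSeries 1).inv_mem hc_mem) (Subgroup.mem_top _)
  have hv_mem : v ∈ (⊤ : Subgroup G).lowerCentralSeries 2 := by
    have hv' : v = ⁅c⁻¹, y⁻¹⁆ := by rw [hvdef, commutatorElement_def]; group
    rw [hv']
    exact Subgroup.commutator_mem_commutator
      (((⊤ : Subgroup G).lowerCentralSeries 1).inv_mem hc_mem) (Subgroup.mem_top _)
  have hcomm_mem : ∀ w ∈ (⊤ : Subgroup G).lowerCentralSeries 2, w ∈ commutator G := by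
    intro w hw
    rw [← Subgroup.top_lowerCentralSeries_one]
    exact (⊤ : Subgroup G).lowerCentralSeries_antitone (by norm_num) hw
  have hu : ∀ g : G, Commute u g := hcentral u hu_mem
  have hv : ∀ g : G, Commute v g := hcentral v hv_mem
  have R1 : y * x = x * y * c := by rw [hcdef]; group
  have R2 : c * x = x * c * u := by rw [hudef]; group
  have R3 : c * y = y * c * v := by rw [hvdef]; group
  have key := collect_aux x y c u v hu hv R1 R2 R3 (p ^ (2 * m))
  set N := p ^ (2 * m) with hN
  -- divisibility facts
  have hNpos : 0 < N := pow_pos hp.pos _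
  have hpmN : p ^ m ∣ N := pow_dvd_pow p (by omega)
  have hNodd : Odd N := (hp.odd_of_ne_two (by omega)).pow
  have h2 : 2 ∣ N - 1 := by obtain ⟨k, hk⟩ := hNodd; omega
  have hA : p ^ m ∣ N.choose 2 := by
    have : N.choose 2 = N * ((N - 1) / 2) := by
      rw [Nat.choose_two_right, Nat.mul_div_assoc N h2]
    rw [this]
    exact dvd_mul_of_dvd_left hpmN _
  have hB : p ^ m ∣ N.choose 3 := by
    have h3 : N * (N - 1).choose 2 = N.choose 3 * 3 := by
      have h := Nat.add_one_mul_choose_eq (N - 1) 2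
      have hs : N - 1 + 1 = N := by omega
      rw [hs] at h
      exact h
    have hdvd : p ^ m ∣ N.choose 3 * 3 := by
      rw [← h3]; exact dvd_mul_of_dvd_left hpmN _
    have hcop : Nat.Coprime (p ^ m) 3 :=
      Nat.Coprime.pow_left m ((hp.coprime_iff_not_dvd).mpr fun hd =>
        absurd (Nat.le_of_dvd (by norm_num) hd) (by omega))
    exact hcop.dvd_of_dvd_mul_right hdvd
  have hD : p ^ m ∣ 2 * N.choose 3 + N.choose 2 :=
    Dvd.dvd.add (Dvd.dvd.mul_left hB 2) hA
  have vanish : ∀ w ∈ commutator G, ∀ e : ℕ, p ^ m ∣ e → w ^ e = 1 := by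
    intro w hw e he
    obtain ⟨k, hk⟩ := he
    rw [hk, pow_mul, hcomm w hw, one_pow]
  rw [key, vanish c (by rw [← Subgroup.top_lowerCentralSeries_one]; exact hc_mem) _ hA,
    vanish u (hcomm_mem u hu_mem) _ hB, vanish v (hcomm_mem v hv_mem) _ hD,
    mul_one, mul_one, mul_one]
end

section
/- Let p be a prime and j an integer with 2 ≤ j ≤ p − 1. Then in the distributive-law expansion Ω(p^m-th degree map) ≃ p^m + ∑_j n_j (Ωω_j)∘H_j, the coefficient n_j, which is an integer multiple of the Witt number (1/j)∑_{d∣j} μ(d)(p^m)^{j/d}, is divisible by p^m. Formally: every integer multiple of (1/j)∑_{d∣j} μ(d)(p^m)^{j/d} is divisible by p^m when 2 ≤ j < p. -/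
open ArithmeticFunction ArithmeticFunction.Moebius in
/-- Every integer multiple of the Witt number `(1/j) ∑_{d∣j} μ(d) (p^m)^(j/d)` is divisible
by `p^m` when `2 ≤ j < p` for a prime `p` and `m ≥ 1`. -/
theorem multiple_of_witt_divisible (p : ℕ) (hp : p.Prime) (m : ℕ) (hm : 1 ≤ m)
    (j : ℕ) (hj2 : 2 ≤ j) (hjp : j < p) :
    ∀ W c : ℤ, (j : ℤ) * W = ∑ d ∈ j.divisors, (μ d : ℤ) * ((p : ℤ) ^ m) ^ (j / d) →
      ((p : ℤ) ^ m) ∣ c * W := by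
  intro W c hW
  have hsum : ((p : ℤ) ^ m) ∣ ∑ d ∈ j.divisors, (μ d : ℤ) * ((p : ℤ) ^ m) ^ (j / d) := by
    refine Finset.dvd_sum fun d hd => ?_
    obtain ⟨hdvd, hj0⟩ := Nat.mem_divisors.mp hd
    have h1 : 1 ≤ j / d := Nat.one_le_div_iff (Nat.pos_of_dvd_of_pos hdvd (Nat.pos_of_ne_zero hj0)) |>.mpr (Nat.le_of_dvd (Nat.pos_of_ne_zero hj0) hdvd)
    exact Dvd.dvd.mul_left (dvd_pow_self _ (by omega)) _
  have hjW : ((p : ℤ) ^ m) ∣ (j : ℤ) * W := hW ▸ hsum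
  have hcop : IsCoprime ((p : ℤ) ^ m) (j : ℤ) := by
    refine IsCoprime.pow_left ?_
    exact Int.isCoprime_iff_gcd_eq_one.mpr <| by rw [Int.gcd_natCast_natCast]; exact (Nat.Prime.coprime_iff_not_dvd hp).mpr fun h => absurd (Nat.le_of_dvd (by omega) h) (by omega)
  exact Dvd.dvd.mul_left (hcop.dvd_of_dvd_mul_left hjW) c
end
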